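/- arXiv:2401.00063 — 2 statements merged into one kernel-verified Lean document; each statement's English description precedes it below -/
import Mathlib

section
/- For a graph G = (V, E_A ∪ E_B) with G_A = (V, E_A) and G_B = (V, E_B), the stable set polytope satisfies STAB(G) = STAB(G_A) ⊙ STAB(G_B), where ⊙ denotes the convex hull of Hadamard products of vertices (equivalently, of characteristic vectors of stable sets). -/
open Finset

variable {V : Type} [Fintype V] [DecidableEq V]

/-- The characteristic (0/1) vector of a set of vertices. -/
noncomputable def charVec (S : Set V) : V → ℝ := S.indicator 1

/-- A stable (independent) set: no two of its elements are adjacent. -/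
def IsStable (G : SimpleGraph V) (S : Set V) : Prop :=
  ∀ ⦃u⦄, u ∈ S → ∀ ⦃v⦄, v ∈ S → ¬ G.Adj u v

/-- The stable set polytope: convex hull of characteristic vectors of stable sets. -/
noncomputable def STAB (G : SimpleGraph V) : Set (V → ℝ) :=
  convexHull ℝ {x | ∃ S : Set V, IsStable G S ∧ x = charVec S}

/-- The clique-constrained (fractional stable set) polytope. -/
def QSTAB (G : SimpleGraph V) : Set (V → ℝ) :=
  {x | (∀ v, 0 ≤ x v) ∧ ∀ Q : Finset V, G.IsClique (↑Q : Set V) → ∑ v ∈ Q, x v ≤ 1}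

/-- The hybrid set `HSTAB(G) = STAB(G_A) ⊙ QSTAB(G_B)`: convex hull of Hadamard
products of vertices (extreme points) of the two polytopes; the vertices of
`STAB(G_A)` are exactly the characteristic vectors of stable sets of `G_A`. -/
noncomputable def HSTAB (GA GB : SimpleGraph V) : Set (V → ℝ) :=
  convexHull ℝ {z | ∃ S : Set V, IsStable GA S ∧
    ∃ ω ∈ (QSTAB GB).extremePoints ℝ, z = charVec S * ω}

/-- Maximum (supremum) of the linear functional `x ↦ w · x` over a set. -/
noncomputable def maxW (P : Set (V → ℝ)) (w : V → ℝ) : ℝ :=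
  sSup ((fun x => ∑ v, w v * x v) '' P)

lemma charVec_mul (S T : Set V) : charVec S * charVec T = charVec (S ∩ T) := by
  funext v
  simp only [charVec, Pi.mul_apply, Set.indicator]
  by_cases hS : v ∈ S <;> by_cases hT : v ∈ T <;>
    simp [hS, hT, Set.mem_inter_iff]

/-- `STAB(G) = STAB(G_A) ⊙ STAB(G_B)` for `G = (V, E_A ∪ E_B)`,
where `⊙` is the convex hull of Hadamard products of vertices, i.e. of
characteristic vectors of stable sets of the two graphs. -/
theorem STAB_union_eq_odot (GA GB : SimpleGraph V) :
    STAB (GA ⊔ GB) =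
      convexHull ℝ {z : V → ℝ | ∃ S T : Set V,
        IsStable GA S ∧ IsStable GB T ∧ z = charVec S * charVec T} := by
  unfold STAB
  congr 1
  ext x
  constructor
  · rintro ⟨S, hS, rfl⟩
    refine ⟨S, S, fun u hu v hv h => hS hu hv (Or.inl h),
      fun u hu v hv h => hS hu hv (Or.inr h), ?_⟩
    rw [charVec_mul, Set.inter_self]
  · rintro ⟨S, T, hS, hT, rfl⟩
    refine ⟨S ∩ T, fun u hu v hv h => ?_, charVec_mul S T⟩
    cases h with
    | inl h => exact hS hu.1 hv.1 h
    | inr h => exact hT hu.2 hv.2 h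
end

section
/- Let G = (V, E_A ∪ E_B), G_A = (V, E_A), G_B = (V, E_B), and define HSTAB(G) = STAB(G_A) ⊙ QSTAB(G_B). Then every vertex of HSTAB(G) is a vertex of QSTAB(G); i.e., the set of extreme points of HSTAB(G) is contained in the set of extreme points of QSTAB(G). -/
open Finset

variable {V : Type} [Fintype V] [DecidableEq V]

/- ### Auxiliary lemmas -/

lemma charVec_of_mem {S : Set V} {v : V} (h : v ∈ S) : charVec S v = 1 := by
  simp [charVec, h]

lemma charVec_of_not_mem {S : Set V} {v : V} (h : v ∉ S) : charVec S v = 0 := by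
  simp [charVec, h]

lemma qstab_convex (G : SimpleGraph V) : Convex ℝ (QSTAB G) := by
  rintro x ⟨hx0, hx1⟩ y ⟨hy0, hy1⟩ a b ha hb hab
  constructor
  · intro u
    have h1 := hx0 u
    have h2 := hy0 u
    simp only [Pi.add_apply, Pi.smul_apply, smul_eq_mul]
    nlinarith
  · intro Q hQ
    have hxs := hx1 Q hQ
    have hys := hy1 Q hQ
    simp only [Pi.add_apply, Pi.smul_apply, smul_eq_mul, Finset.sum_add_distrib,
      ← Finset.mul_sum]
    nlinarith

lemma qstab_closed (G : SimpleGraph V) : IsClosed (QSTAB G) := by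
  have h : QSTAB G = (⋂ v : V, {x : V → ℝ | 0 ≤ x v}) ∩
      ⋂ (Q : Finset V) (_ : G.IsClique (↑Q : Set V)), {x : V → ℝ | ∑ v ∈ Q, x v ≤ 1} := by
    ext x
    simp only [QSTAB, Set.mem_setOf_eq, Set.mem_inter_iff, Set.mem_iInter]
  rw [h]
  exact (isClosed_iInter fun v => isClosed_le continuous_const (continuous_apply v)).inter
    (isClosed_iInter fun Q => isClosed_iInter fun _ =>
      isClosed_le (by continuity) continuous_const)

lemma qstab_compact (G : SimpleGraph V) : IsCompact (QSTAB G) := by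
  refine IsCompact.of_isClosed_subset (isCompact_univ_pi fun _ : V => isCompact_Icc
    (a := (0:ℝ)) (b := 1)) (qstab_closed G) ?_
  rintro x ⟨hx0, hx1⟩ v _
  refine ⟨hx0 v, ?_⟩
  have h := hx1 {v} (by
    intro a ha b hb hab
    simp only [Finset.coe_singleton, Set.mem_singleton_iff] at ha hb
    exact absurd (ha.trans hb.symm) hab)
  simpa using h

lemma qstab_extremePoints_finite (G : SimpleGraph V) :
    ((QSTAB G).extremePoints ℝ).Finite := by
  classical
  refine Set.Finite.of_finite_image (f := fun x : V → ℝ =>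
    (({v : V | x v = 0}, {Q : Finset V | G.IsClique (↑Q : Set V) ∧ ∑ v ∈ Q, x v = 1}) :
      Set V × Set (Finset V))) (Set.toFinite _) ?_
  rintro x hx y hy hxy
  have hz : {v : V | x v = 0} = {v : V | y v = 0} := congrArg Prod.fst hxy
  have hQ : {Q : Finset V | G.IsClique (↑Q : Set V) ∧ ∑ v ∈ Q, x v = 1} =
      {Q : Finset V | G.IsClique (↑Q : Set V) ∧ ∑ v ∈ Q, y v = 1} := congrArg Prod.snd hxy
  by_contra hne
  have hxK := hx.1
  have hyK := extremePoints_subset hy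
  -- all constraints are eventually satisfied by the perturbed point
  have hvev : ∀ v : V, ∀ᶠ ε : ℝ in nhds 0, 0 ≤ x v + ε * (x v - y v) := by
    intro v
    rcases eq_or_lt_of_le (hxK.1 v) with h0 | hpos
    · have hyv : y v = 0 := by
        have hvmem : v ∈ {v : V | x v = 0} := h0.symm
        rw [hz] at hvmem
        exact hvmem
      filter_upwards with ε
      rw [← h0, hyv]
      simp
    · have hc : ContinuousAt (fun ε : ℝ => x v + ε * (x v - y v)) 0 := by fun_prop
      have h00 : (fun ε : ℝ => x v + ε * (x v - y v)) 0 = x v := by simp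
      have hev := hc.eventually (p := fun t => 0 < t) (by rw [h00]; exact lt_mem_nhds hpos)
      filter_upwards [hev] with ε hε using hε.le
  have hQev : ∀ Q : {Q : Finset V // G.IsClique (↑Q : Set V)},
      ∀ᶠ ε : ℝ in nhds 0, ∑ v ∈ Q.1, (x v + ε * (x v - y v)) ≤ 1 := by
    rintro ⟨Q, hQc⟩
    rcases eq_or_lt_of_le (hxK.2 Q hQc) with h1 | hlt
    · have hy1 : ∑ v ∈ Q, y v = 1 := by
        have hQmem : Q ∈ {Q : Finset V | G.IsClique (↑Q : Set V) ∧ ∑ v ∈ Q, x v = 1} :=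
          ⟨hQc, h1⟩
        rw [hQ] at hQmem
        exact hQmem.2
      filter_upwards with ε
      have hs : ∑ v ∈ Q, (x v + ε * (x v - y v)) = ∑ v ∈ Q, x v
          + ε * (∑ v ∈ Q, x v - ∑ v ∈ Q, y v) := by
        rw [Finset.sum_add_distrib, ← Finset.mul_sum, Finset.sum_sub_distrib]
      rw [hs, h1, hy1]
      norm_num
    · have hc : ContinuousAt (fun ε : ℝ => ∑ v ∈ Q, (x v + ε * (x v - y v))) 0 := by fun_prop
      have h00 : (fun ε : ℝ => ∑ v ∈ Q, (x v + ε * (x v - y v))) 0 = ∑ v ∈ Q, x v := by simp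
      have hev := hc.eventually (p := fun t => t < 1) (by rw [h00]; exact gt_mem_nhds hlt)
      filter_upwards [hev] with ε hε using hε.le
  have hall : ∀ᶠ ε : ℝ in nhds 0, (∀ v : V, 0 ≤ x v + ε * (x v - y v)) ∧
      ∀ Q : {Q : Finset V // G.IsClique (↑Q : Set V)},
        ∑ v ∈ Q.1, (x v + ε * (x v - y v)) ≤ 1 :=
    (Filter.eventually_all.2 hvev).and (Filter.eventually_all.2 hQev)
  have hall' : ∀ᶠ ε : ℝ in nhdsWithin 0 (Set.Ioi 0),
      ((∀ v : V, 0 ≤ x v + ε * (x v - y v)) ∧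
        ∀ Q : {Q : Finset V // G.IsClique (↑Q : Set V)},
          ∑ v ∈ Q.1, (x v + ε * (x v - y v)) ≤ 1) ∧ 0 < ε :=
    (hall.filter_mono nhdsWithin_le_nhds).and
      (eventually_mem_nhdsWithin.mono fun ε hε => hε)
  obtain ⟨ε, ⟨hc1, hc2⟩, hεpos⟩ := hall'.exists
  -- the perturbed point
  set p : V → ℝ := fun v => x v + ε * (x v - y v) with hp
  have hpK : p ∈ QSTAB G := ⟨fun v => hc1 v, fun Q hQc => hc2 ⟨Q, hQc⟩⟩
  -- x lies in the open segment between p and y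
  have hseg : x ∈ openSegment ℝ p y := by
    refine ⟨1 / (1 + ε), ε / (1 + ε), by positivity, by positivity, by field_simp, ?_⟩
    funext v
    simp only [Pi.add_apply, Pi.smul_apply, smul_eq_mul, hp]
    field_simp
    ring
  exact hne (hx.2 hyK hpK (by rw [openSegment_symm]; exact hseg)).symm

lemma qstab_eq_convexHull (G : SimpleGraph V) :
    QSTAB G = convexHull ℝ ((QSTAB G).extremePoints ℝ) := by
  have h := closure_convexHull_extremePoints (qstab_compact G) (qstab_convex G)
  rw [((qstab_extremePoints_finite G).isClosed_convexHull (𝕜 := ℝ)).closure_eq] at h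
  exact h.symm

/-- Multiplication by the characteristic vector, as a linear map. -/
noncomputable def hadL (S : Set V) : (V → ℝ) →ₗ[ℝ] (V → ℝ) where
  toFun x := charVec S * x
  map_add' a b := by funext v; simp [mul_add]
  map_smul' c a := by
    funext v
    simp only [Pi.mul_apply, Pi.smul_apply, smul_eq_mul, RingHom.id_apply]
    ring

lemma charVec_mul_self (S : Set V) (x : V → ℝ) (h : ∀ v, v ∉ S → x v = 0) :
    charVec S * x = x := by
  funext v
  by_cases hv : v ∈ S
  · simp [charVec_of_mem hv]
  · simp [charVec_of_not_mem hv, h v hv]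

/-- A Hadamard product of a `G_A`-stable characteristic vector and a point of
`QSTAB G_B` belongs to `QSTAB (G_A ⊔ G_B)`. -/
lemma charVec_mul_mem_qstab {GA GB : SimpleGraph V} {S : Set V} (hS : IsStable GA S)
    {ω : V → ℝ} (hω : ω ∈ QSTAB GB) : charVec S * ω ∈ QSTAB (GA ⊔ GB) := by
  classical
  constructor
  · intro v
    by_cases hv : v ∈ S
    · simp [charVec_of_mem hv, hω.1 v]
    · simp [charVec_of_not_mem hv]
  · intro Q hQc
    have hsum : ∑ v ∈ Q, (charVec S * ω) v = ∑ v ∈ Q.filter (· ∈ S), ω v := by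
      rw [Finset.sum_filter]
      refine Finset.sum_congr rfl fun v _ => ?_
      by_cases hv : v ∈ S
      · simp [charVec_of_mem hv, hv]
      · simp [charVec_of_not_mem hv, hv]
    rw [hsum]
    refine hω.2 _ (fun a ha b hb hab => ?_)
    simp only [Finset.coe_filter, Set.mem_setOf_eq] at ha hb
    have hadj := hQc (Finset.mem_coe.2 ha.1) (Finset.mem_coe.2 hb.1) hab
    simp only [SimpleGraph.sup_adj] at hadj
    rcases hadj with h | h
    · exact absurd h (hS ha.2 hb.2)
    · exact h

/-- Any point of `QSTAB G_B` supported on a `G_A`-stable set lies in `HSTAB`. -/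
lemma mem_HSTAB_of_supported {GA GB : SimpleGraph V} {S : Set V} (hS : IsStable GA S)
    {x : V → ℝ} (hx : x ∈ QSTAB GB) (hsupp : ∀ v, v ∉ S → x v = 0) :
    x ∈ HSTAB GA GB := by
  have hx' : x ∈ convexHull ℝ ((QSTAB GB).extremePoints ℝ) := by
    rw [← qstab_eq_convexHull]; exact hx
  have himg : hadL S x ∈ convexHull ℝ (hadL S '' ((QSTAB GB).extremePoints ℝ)) := by
    rw [← LinearMap.image_convexHull]
    exact Set.mem_image_of_mem _ hx'
  have hsub : hadL S '' ((QSTAB GB).extremePoints ℝ) ⊆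
      {z | ∃ T : Set V, IsStable GA T ∧ ∃ ω ∈ (QSTAB GB).extremePoints ℝ, z = charVec T * ω} := by
    rintro _ ⟨ω, hω, rfl⟩
    exact ⟨S, hS, ω, hω, rfl⟩
  have : hadL S x ∈ HSTAB GA GB := convexHull_mono hsub himg
  rwa [show hadL S x = x from charVec_mul_self S x hsupp] at this

/-- Every vertex (extreme point) of
`HSTAB(G) = STAB(G_A) ⊙ QSTAB(G_B)` is a vertex of `QSTAB(G)`,
where `G = (V, E_A ∪ E_B)`. -/
theorem HSTAB_extremePoints_subset (GA GB : SimpleGraph V) :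
    (HSTAB GA GB).extremePoints ℝ ⊆ (QSTAB (GA ⊔ GB)).extremePoints ℝ := by
  classical
  intro z hz
  obtain ⟨S, hS, ω, hω, hzdef⟩ := extremePoints_convexHull_subset hz
  have hωK : ω ∈ QSTAB GB := extremePoints_subset hω
  refine mem_extremePoints.2 ⟨hzdef ▸ charVec_mul_mem_qstab hS hωK, ?_⟩
  intro x hxQ y hyQ hseg
  -- QSTAB of the union is contained in QSTAB of each part
  have hQB : ∀ w, w ∈ QSTAB (GA ⊔ GB) → w ∈ QSTAB GB := fun w hw =>
    ⟨hw.1, fun Q hQc => hw.2 Q (hQc.mono le_sup_right)⟩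
  obtain ⟨a, b, ha, hb, hab, habz⟩ := hseg
  -- x and y vanish outside S
  have hsupp : ∀ v, v ∉ S → x v = 0 ∧ y v = 0 := by
    intro v hv
    have hz0 : z v = 0 := by rw [hzdef]; simp [charVec_of_not_mem hv]
    have h0 : a * x v + b * y v = 0 := by
      have := congrFun habz v
      simpa using this.trans hz0
    have h1 : 0 ≤ a * x v := mul_nonneg ha.le (hxQ.1 v)
    have h2 : 0 ≤ b * y v := mul_nonneg hb.le (hyQ.1 v)
    constructor
    · have : a * x v = 0 := by linarith
      exact (mul_eq_zero.1 this).resolve_left (ne_of_gt ha)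
    · have : b * y v = 0 := by linarith
      exact (mul_eq_zero.1 this).resolve_left (ne_of_gt hb)
  have hxH : x ∈ HSTAB GA GB :=
    mem_HSTAB_of_supported hS (hQB x hxQ) fun v hv => (hsupp v hv).1
  have hyH : y ∈ HSTAB GA GB :=
    mem_HSTAB_of_supported hS (hQB y hyQ) fun v hv => (hsupp v hv).2
  exact ⟨hz.2 hxH hyH ⟨a, b, ha, hb, hab, habz⟩,
    hz.2 hyH hxH (by rw [openSegment_symm]; exact ⟨a, b, ha, hb, hab, habz⟩)⟩
end
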